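/- Let i ≠ j be indices in {1, …, 2g+2}, let p ∈ K satisfy p^{2g} = −f'(α_j)/f'(α_i), let ℓ_{ijk} be the associated symmetric roots, and let ℓ_{jik} := ℓ_{ijk}^{-1} be the symmetric roots for (j,i) associated to p^{-1}. Write X·∏_{k ≠ i,j}(X − ℓ_{ijk}) = X^{2g+1} + G_1 X^{2g} + ⋯ + G_{2g-1} X² + X. Then X·∏_{k ≠ i,j}(X − ℓ_{jik}) = X^{2g+1} + G_{2g-1} X^{2g} + ⋯ + G_1 X² + X; that is, the coefficient sequence of the symmetric model for (j,i) is the reversal of the coefficient sequence of the symmetric model for (i,j). -/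

import Mathlib

open Finset Polynomial

private lemma reverse_prod_aux {K : Type*} [Field K] {ι : Type*} (s : Finset ι)
    (f : ι → Polynomial K) :
    (∏ k ∈ s, f k).reverse = ∏ k ∈ s, (f k).reverse := by
  classical
  induction s using Finset.induction_on with
  | empty => simp [Polynomial.reverse, Polynomial.reflect_one]
  | insert _ _ h ih =>
      rw [Finset.prod_insert h, Finset.prod_insert h, Polynomial.reverse_mul_of_domain, ih]

private lemma reverse_X_sub_C_aux {K : Type*} [Field K] (a : K) (ha : a ≠ 0) :
    (X - C a).reverse = C (-a) * (X - C a⁻¹) := by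
  have h1 : (X - C a).reverse = Polynomial.reflect 1 (X - C a) := by
    rw [Polynomial.reverse, natDegree_X_sub_C]
  rw [h1, Polynomial.reflect_sub, Polynomial.reflect_C]
  have h2 : Polynomial.reflect 1 (X : Polynomial K) = 1 := by
    have := Polynomial.reflect_monomial (R := K) 1 1
    simpa using this
  rw [h2]
  have : C (-a) * (X - C a⁻¹) = C (-a) * X - C (-a * a⁻¹) := by
    rw [mul_sub, ← C_mul]
  rw [this]
  have : -a * a⁻¹ = -1 := by field_simp
  rw [this]
  simp [pow_one]
  ring

/-- With the exact normalization `p^{2g} = −f'(α j)/f'(α i)`, the symmetric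
model `Q` for `(j,i)` built from the inverse roots `ℓ_{jik} = ℓ_{ijk}⁻¹` has as coefficient
sequence the reversal of that of the symmetric model `P` for `(i,j)`:
`Q.coeff n = P.coeff (2g+2−n)` for `1 ≤ n ≤ 2g+1`. -/
theorem symmetric_model_coefficient_reversal
    (g : ℕ) (hg : 1 ≤ g) (K : Type*) [Field K]
    (α : Fin (2*g+2) → K) (hα : Function.Injective α)
    (d : Fin (2*g+2) → K)
    (hd : ∀ m, d m = ∏ n ∈ univ.erase m, (α m - α n))
    (i j : Fin (2*g+2)) (hij : i ≠ j)
    (p : K) (hp : p ^ (2*g) = -(d j / d i))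
    (ℓ : Fin (2*g+2) → K)
    (hℓ : ∀ k, ℓ k = p * (α i - α k) / (α j - α k))
    (P Q : Polynomial K)
    (hP : P = X * ∏ k ∈ univ \ {i, j}, (X - C (ℓ k)))
    (hQ : Q = X * ∏ k ∈ univ \ {i, j}, (X - C (ℓ k)⁻¹)) :
    ∀ n : ℕ, 1 ≤ n → n ≤ 2*g+1 → Q.coeff n = P.coeff (2*g+2-n) := by
  classical
  set s : Finset (Fin (2*g+2)) := univ \ {i, j} with hs
  -- membership facts
  have hmem : ∀ k, k ∈ s ↔ k ≠ i ∧ k ≠ j := by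
    intro k; simp [hs, Finset.mem_sdiff]
  -- cardinality of s
  have hcard : s.card = 2*g := by
    have h2 : ({i, j} : Finset (Fin (2*g+2))).card = 2 := by
      rw [Finset.card_insert_of_notMem (by simpa using hij), Finset.card_singleton]
    rw [hs, Finset.card_sdiff_of_subset (Finset.subset_univ _), h2]
    simp [Fintype.card_fin]
  -- nonvanishing of differences
  have hsub : ∀ a b : Fin (2*g+2), a ≠ b → α a - α b ≠ 0 := by
    intro a b hab
    exact sub_ne_zero.mpr (fun h => hab (hα h))
  -- d i and d j are nonzero
  have hdne : ∀ m, d m ≠ 0 := by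
    intro m
    rw [hd m]
    exact Finset.prod_ne_zero_iff.mpr (fun n hn => hsub m n (by
      rcases Finset.mem_erase.mp hn with ⟨h1, _⟩; exact fun h => h1 h.symm))
  -- p ≠ 0
  have hpne : p ≠ 0 := by
    intro h0
    rw [h0] at hp
    have h2g : 2*g ≠ 0 := by omega
    rw [zero_pow h2g] at hp
    have : d j / d i ≠ 0 := div_ne_zero (hdne j) (hdne i)
    rw [← neg_eq_iff_eq_neg] at hp
    simp at hp
    exact this hp.symm
  -- ℓ k ≠ 0 on s
  have hℓne : ∀ k ∈ s, ℓ k ≠ 0 := by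
    intro k hk
    rcases (hmem k).mp hk with ⟨hki, hkj⟩
    rw [hℓ k]
    exact div_ne_zero (mul_ne_zero hpne (hsub i k (fun h => hki h.symm)))
      (hsub j k (fun h => hkj h.symm))
  -- rewrite d i and d j in terms of products over s
  have herase : ∀ a b : Fin (2*g+2), a ≠ b →
      (univ.erase a).erase b = univ \ ({a, b} : Finset _) := by
    intro a b _
    ext k
    simp [Finset.mem_erase, Finset.mem_sdiff, and_comm]
  have hdi : d i = (α i - α j) * ∏ k ∈ s, (α i - α k) := by
    rw [hd i, ← Finset.mul_prod_erase (univ.erase i) (fun n => α i - α n)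
      (Finset.mem_erase.mpr ⟨Ne.symm hij, Finset.mem_univ j⟩), herase i j hij, hs]
  have hdj : d j = (α j - α i) * ∏ k ∈ s, (α j - α k) := by
    have h' : (univ.erase j).erase i = univ \ ({i, j} : Finset _) := by
      ext k
      simp [Finset.mem_erase, Finset.mem_sdiff, and_comm]
    rw [hd j, ← Finset.mul_prod_erase (univ.erase j) (fun n => α j - α n)
      (Finset.mem_erase.mpr ⟨hij, Finset.mem_univ i⟩), h', hs]
  -- the product of symmetric roots is 1
  have hA : (∏ k ∈ s, (α i - α k)) ≠ 0 :=
    Finset.prod_ne_zero_iff.mpr (fun k hk => hsub i k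
      (fun h => ((hmem k).mp hk).1 h.symm))
  have hB : (∏ k ∈ s, (α j - α k)) ≠ 0 :=
    Finset.prod_ne_zero_iff.mpr (fun k hk => hsub j k
      (fun h => ((hmem k).mp hk).2 h.symm))
  have hprod : ∏ k ∈ s, ℓ k = 1 := by
    have h1 : ∏ k ∈ s, ℓ k =
        p ^ (2*g) * (∏ k ∈ s, (α i - α k)) / (∏ k ∈ s, (α j - α k)) := by
      calc ∏ k ∈ s, ℓ k = ∏ k ∈ s, (p * (α i - α k) / (α j - α k)) := by
            exact Finset.prod_congr rfl (fun k _ => hℓ k)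
        _ = (∏ k ∈ s, (p * (α i - α k))) / (∏ k ∈ s, (α j - α k)) := by
            rw [Finset.prod_div_distrib]
        _ = p ^ s.card * (∏ k ∈ s, (α i - α k)) / (∏ k ∈ s, (α j - α k)) := by
            rw [Finset.prod_mul_distrib, Finset.prod_const]
        _ = _ := by rw [hcard]
    rw [h1, hp, hdi, hdj]
    have hije : α i - α j ≠ 0 := hsub i j hij
    field_simp
    ring
  -- the polynomial R and its reverse
  set R : Polynomial K := ∏ k ∈ s, (X - C (ℓ k)) with hR
  have hRdeg : R.natDegree = 2*g := by
    rw [hR, Polynomial.natDegree_prod _ _ (fun k _ => X_sub_C_ne_zero (ℓ k))]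
    simp [natDegree_X_sub_C, hcard]
  have hRrev : R.reverse = ∏ k ∈ s, (X - C (ℓ k)⁻¹) := by
    rw [hR, reverse_prod_aux]
    have heach : ∀ k ∈ s, (X - C (ℓ k)).reverse = C (-(ℓ k)) * (X - C (ℓ k)⁻¹) :=
      fun k hk => reverse_X_sub_C_aux (ℓ k) (hℓne k hk)
    rw [Finset.prod_congr rfl heach, Finset.prod_mul_distrib, ← map_prod]
    have : ∏ k ∈ s, (-(ℓ k)) = 1 := by
      have : ∏ k ∈ s, -ℓ k = (-1 : K) ^ s.card * ∏ k ∈ s, ℓ k := by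
        rw [← Finset.prod_const, ← Finset.prod_mul_distrib]
        simp [neg_one_mul]
      rw [this, hprod, hcard]
      simp [pow_mul]
    rw [this]
    simp
  -- coefficient comparison
  intro n hn1 hn2
  obtain ⟨m, rfl⟩ : ∃ m, n = m + 1 := ⟨n - 1, by omega⟩
  have hm : m ≤ 2*g := by omega
  have hQc : Q.coeff (m+1) = R.coeff (2*g - m) := by
    rw [hQ, ← hRrev, Polynomial.coeff_X_mul, Polynomial.coeff_reverse, hRdeg,
      Polynomial.revAt_le hm]
  have hPc : P.coeff (2*g+2-(m+1)) = R.coeff (2*g - m) := by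
    have : 2*g+2-(m+1) = (2*g - m) + 1 := by omega
    rw [this, hP, Polynomial.coeff_X_mul]
  rw [hQc, hPc]
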